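/- arXiv:0805.3051 — 2 statements merged into one kernel-verified Lean document; each statement's English description precedes it below -/
import Mathlib

section
/- Let d be a natural number and let W be a real linear subspace of ℝ^d (the space of functions Fin d → ℝ). Then every element of S_W = {v : Fin d → ℕ | the coordinatewise real image of v lies in W} can be written as a finite sum (possibly empty, giving 0) of minimal nonzero elements of S_W, where minimality is with respect to the componentwise partial order. -/
/-- Generation part of Lemma 3.1: every element of
`S_W = {v : Fin d → ℕ | (fun i => (v i : ℝ)) ∈ W}` is a finite (possibly empty)
sum of minimal nonzero elements of `S_W`, minimality being with respect to the
componentwise partial order. -/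
theorem generated_by_minimal_elements (d : ℕ) (W : Submodule ℝ (Fin d → ℝ))
    (v : Fin d → ℕ) (hv : (fun i => (v i : ℝ)) ∈ W) :
    ∃ l : Multiset (Fin d → ℕ),
      (∀ m ∈ l,
        (fun i => (m i : ℝ)) ∈ W ∧ m ≠ 0 ∧
        ∀ w : Fin d → ℕ, (fun i => (w i : ℝ)) ∈ W → w ≠ 0 →
          (∀ i, w i ≤ m i) → w = m) ∧
      l.sum = v := by
  suffices H : ∀ n (v : Fin d → ℕ), (∑ i, v i) ≤ n → (fun i => (v i : ℝ)) ∈ W →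
      ∃ l : Multiset (Fin d → ℕ),
      (∀ m ∈ l,
        (fun i => (m i : ℝ)) ∈ W ∧ m ≠ 0 ∧
        ∀ w : Fin d → ℕ, (fun i => (w i : ℝ)) ∈ W → w ≠ 0 →
          (∀ i, w i ≤ m i) → w = m) ∧
      l.sum = v by
    exact H _ v le_rfl hv
  intro n
  induction n using Nat.strong_induction_on with
  | _ n ih =>
    intro v hsum hv
    by_cases hv0 : v = 0
    · exact ⟨0, by simp, by simp [hv0]⟩
    by_cases hmin : ∀ w : Fin d → ℕ, (fun i => (w i : ℝ)) ∈ W → w ≠ 0 →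
        (∀ i, w i ≤ v i) → w = v
    · refine ⟨{v}, ?_, by simp⟩
      intro m hm
      rw [Multiset.mem_singleton] at hm
      subst hm
      exact ⟨hv, hv0, hmin⟩
    · push_neg at hmin
      obtain ⟨w, hwW, hw0, hwle, hwne⟩ := hmin
      -- v - w is in S_W
      have hsub : (fun i => ((v i - w i : ℕ) : ℝ)) ∈ W := by
        have : (fun i => ((v i - w i : ℕ) : ℝ)) =
            (fun i => (v i : ℝ)) - (fun i => (w i : ℝ)) := by
          funext i
          simp [Nat.cast_sub (hwle i)]
        rw [this]
        exact W.sub_mem hv hwW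
      have hwpos : 0 < ∑ i, w i := by
        rcases Nat.eq_zero_or_pos (∑ i, w i) with h | h
        · exact absurd (funext fun i => Finset.sum_eq_zero_iff.mp h i (Finset.mem_univ i)) hw0
        · exact h
      have hwlt : ∑ i, w i < ∑ i, v i := by
        rcases lt_or_eq_of_le (Finset.sum_le_sum fun i _ => hwle i) with h | h
        · exact h
        · exfalso; apply hwne
          funext i
          exact (Finset.sum_eq_sum_iff_of_le (fun i _ => hwle i)).mp h i (Finset.mem_univ i)
      have hn0 : 0 < n := lt_of_lt_of_le (lt_of_le_of_lt (Nat.zero_le _) hwlt) hsum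
      obtain ⟨l1, hl1, hl1sum⟩ := ih (n - 1) (by omega)
        (fun i => v i - w i)
        (by
          have h1 : ∑ i, (v i - w i) = (∑ i, v i) - ∑ i, w i := by
            rw [Finset.sum_tsub_distrib]
            intro i _; exact hwle i
          show ∑ i, (v i - w i) ≤ n - 1
          omega) hsub
      obtain ⟨l2, hl2, hl2sum⟩ := ih (n - 1) (by omega) w (by omega) hwW
      refine ⟨l1 + l2, ?_, ?_⟩
      · intro m hm
        rcases Multiset.mem_add.mp hm with h | h
        exacts [hl1 m h, hl2 m h]
      · rw [Multiset.sum_add, hl1sum, hl2sum]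
        funext i
        simp [Nat.sub_add_cancel (hwle i)]
end

section
/- Let d be a natural number and let W be a real linear subspace of ℝ^d (the space of functions Fin d → ℝ). Then the additive submonoid of ℕ^d (functions Fin d → ℕ under pointwise addition) consisting of those v whose coordinatewise real image lies in W is a finitely generated additive monoid: there exist finitely many elements u_1, …, u_k of this submonoid such that every element of the submonoid is a sum of copies of the u_i (equivalently, an ℕ-linear combination of u_1, …, u_k). -/
/-- Lemma 3.1: the additive submonoid of `Fin d → ℕ` consisting of those `v`
whose coordinatewise real image lies in a linear subspace `W` of `ℝ^d` is
finitely generated: there are finitely many elements `u 0, …, u (k-1)` of the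
submonoid such that every element is an `ℕ`-linear combination of them. -/
theorem submonoid_finitely_generated (d : ℕ) (W : Submodule ℝ (Fin d → ℝ)) :
    ∃ (k : ℕ) (u : Fin k → (Fin d → ℕ)),
      (∀ j, (fun i => (u j i : ℝ)) ∈ W) ∧
      ∀ v : Fin d → ℕ, (fun i => (v i : ℝ)) ∈ W →
        ∃ c : Fin k → ℕ, v = ∑ j, c j • u j := by
  classical
  set S : Set (Fin d → ℕ) := {v | (fun i => (v i : ℝ)) ∈ W} with hSdef
  -- closure of S under truncated subtraction
  have hsub : ∀ v m : Fin d → ℕ, v ∈ S → m ∈ S → m ≤ v → (v - m) ∈ S := by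
    intro v m hv hm hle
    have h : (fun i => ((v - m) i : ℝ)) =
        (fun i => (v i : ℝ)) - fun i => (m i : ℝ) := by
      funext i
      simp [Pi.sub_apply, Nat.cast_sub (hle i)]
    show (fun i => ((v - m) i : ℝ)) ∈ W
    rw [h]
    exact W.sub_mem hv hm
  -- the set of minimal nonzero elements of S
  set M : Set (Fin d → ℕ) :=
    {m | m ∈ S ∧ m ≠ 0 ∧ ∀ w ∈ S, w ≠ 0 → w ≤ m → w = m} with hMdef
  have hanti : IsAntichain (· ≤ ·) M := by
    intro a ha b hb hne hle
    exact hne (hb.2.2 a ha.1 ha.2.1 hle)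
  have hMfin : M.Finite :=
    hanti.finite_of_partiallyWellOrderedOn (Set.isPWO_of_wellQuasiOrderedLE M)
  obtain ⟨k, u, hurange⟩ := hMfin.fin_embedding
  -- strict monotonicity of coordinate sums
  have hsumlt : ∀ w w' : Fin d → ℕ, w ≤ w' → w ≠ w' →
      (∑ i, w i) < ∑ i, w' i := by
    intro w w' hle hne
    obtain ⟨i, hi⟩ := Function.ne_iff.mp hne
    exact Finset.sum_lt_sum (fun i _ => hle i)
      ⟨i, Finset.mem_univ i, lt_of_le_of_ne (hle i) hi⟩
  -- main induction
  have key : ∀ N : ℕ, ∀ v : Fin d → ℕ, (∑ i, v i) = N → v ∈ S →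
      ∃ c : Fin k → ℕ, v = ∑ j, c j • (u j : Fin d → ℕ) := by
    intro N
    induction N using Nat.strong_induction_on with
    | _ N ih =>
      intro v hsum hv
      by_cases hv0 : v = 0
      · exact ⟨0, by simp [hv0]⟩
      · -- find a minimal nonzero element of S below v
        set T : Set ℕ := {n | ∃ w, w ∈ S ∧ w ≠ 0 ∧ w ≤ v ∧ (∑ i, w i) = n}
          with hTdef
        have hTne : T.Nonempty := ⟨∑ i, v i, v, hv, hv0, le_refl v, rfl⟩
        obtain ⟨m, hmS, hm0, hmle, hmsum⟩ := Nat.sInf_mem hTne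
        have hmM : m ∈ M := by
          refine ⟨hmS, hm0, fun w hwS hw0 hwm => ?_⟩
          by_contra hne
          have h1 : (∑ i, w i) ∈ T := ⟨w, hwS, hw0, le_trans hwm hmle, rfl⟩
          have h2 : (∑ i, w i) < sInf T := by
            rw [← hmsum]; exact hsumlt w m hwm hne
          exact absurd (Nat.sInf_le h1) (not_le.mpr h2)
        obtain ⟨j₀, hj₀⟩ : ∃ j₀, (u j₀ : Fin d → ℕ) = m := by
          have := hurange ▸ hmM
          exact this
        -- subtract m from v and apply the induction hypothesis
        have hvm : v - m ∈ S := hsub v m hv hmS hmle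
        have hsplit : (v - m) + m = v := by
          funext i
          exact Nat.sub_add_cancel (hmle i)
        have hsumsub : (∑ i, (v - m) i) + (∑ i, m i) = N := by
          rw [← Finset.sum_add_distrib]
          simp only [← Pi.add_apply, hsplit, hsum]
        have hmpos : 0 < ∑ i, m i := by
          rcases Nat.eq_zero_or_pos (∑ i, m i) with h | h
          · exfalso
            apply hm0
            funext i
            exact Finset.sum_eq_zero_iff.mp h i (Finset.mem_univ i)
          · exact h
        have hlt : (∑ i, (v - m) i) < N := by omega
        obtain ⟨c', hc'⟩ := ih _ hlt (v - m) rfl hvm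
        set e : Fin k → ℕ := fun j => if j = j₀ then 1 else 0 with hedef
        have hsingle : (∑ j, e j • (u j : Fin d → ℕ)) = m := by
          rw [Finset.sum_eq_single j₀]
          · simp [hedef, hj₀]
          · intro b _ hb
            simp [hedef, hb]
          · intro h
            exact absurd (Finset.mem_univ j₀) h
        refine ⟨fun j => c' j + e j, ?_⟩
        calc v = (v - m) + m := hsplit.symm
          _ = (∑ j, c' j • (u j : Fin d → ℕ))
              + ∑ j, e j • (u j : Fin d → ℕ) := by
                rw [← hc', hsingle]
          _ = ∑ j, (c' j + e j) • (u j : Fin d → ℕ) := by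
                rw [← Finset.sum_add_distrib]
                refine Finset.sum_congr rfl fun j _ => ?_
                rw [add_smul]
    -- end induction
  refine ⟨k, fun j => u j, fun j => ?_, fun v hv => key (∑ i, v i) v rfl hv⟩
  have : (u j : Fin d → ℕ) ∈ M := hurange ▸ Set.mem_range_self j
  exact this.1
end
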